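/- arXiv:2507.13731 — 3 statements merged into one kernel-verified Lean document; each statement's English description precedes it below -/
import Mathlib

section
/- Let q ≥ 1 be a natural number, let X be an m × n complex matrix, and let Q be an n × r complex matrix with Qᴴ Q = I. Then ‖X · (I − Q Qᴴ)‖ ≤ ‖(Xᴴ X)^q · (I − Q Qᴴ)‖^(1/(2q)), where ‖·‖ denotes the L2 operator norm (spectral norm) of a matrix. -/
open Matrix
open scoped Matrix.Norms.L2Operator

/-- Deterministic core of Theorem 3 of the paper (complex version): for `q ≥ 1`, an `m × n`
complex matrix `X` and an `n × r` matrix `Q` with `Qᴴ Q = I`,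
`‖X (I - Q Qᴴ)‖ ≤ ‖(Xᴴ X)^q (I - Q Qᴴ)‖ ^ (1/(2q))` in the L2 operator norm. -/
theorem spectral_residual_root_bound {m n r : ℕ} (q : ℕ) (hq : 1 ≤ q)
    (X : Matrix (Fin m) (Fin n) ℂ) (Q : Matrix (Fin n) (Fin r) ℂ)
    (hQ : Qᴴ * Q = 1) :
    ‖X * (1 - Q * Qᴴ)‖ ≤ ‖(Xᴴ * X) ^ q * (1 - Q * Qᴴ)‖ ^ (1 / (2 * (q : ℝ))) := by
  set P : Matrix (Fin n) (Fin n) ℂ := 1 - Q * Qᴴ with hP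
  set M : Matrix (Fin n) (Fin n) ℂ := Xᴴ * X with hM
  -- basic algebraic facts
  have hPH : Pᴴ = P := by
    simp [hP, conjTranspose_sub, conjTranspose_mul]
  have hPP : P * P = P := by
    simp only [hP, sub_mul, mul_sub, one_mul, mul_one]
    rw [Matrix.mul_assoc Q Qᴴ (Q * Qᴴ), ← Matrix.mul_assoc Qᴴ Q Qᴴ, hQ, Matrix.one_mul]
    rw [sub_self, sub_zero]
  have hMH : Mᴴ = M := by
    simp [hM, conjTranspose_mul]
  -- the sequence of residual norms
  set v : ℕ → ℝ := fun k => ‖M ^ k * P‖ with hv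
  have hvnn : ∀ k, 0 ≤ v k := fun k => norm_nonneg _
  have hv0 : v 0 = ‖P‖ := by simp [hv]
  -- ‖P‖ ≤ 1
  have hPle1 : ‖P‖ ≤ 1 := by
    have h1 : ‖P‖ * ‖P‖ = ‖P‖ := by
      rw [← Matrix.l2_opNorm_conjTranspose_mul_self P, hPH, hPP]
    nlinarith [norm_nonneg P]
  have hv0le1 : v 0 ≤ 1 := by rw [hv0]; exact hPle1
  -- key log-convexity inequality
  have key : ∀ k, v (k + 1) * v (k + 1) ≤ v k * v (k + 2) := by
    intro k
    have e : (M ^ (k + 1) * P)ᴴ * (M ^ (k + 1) * P)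
        = (M ^ k * P)ᴴ * (M ^ (k + 2) * P) := by
      simp only [conjTranspose_mul, conjTranspose_pow, hMH, hPH]
      rw [mul_assoc, mul_assoc, ← mul_assoc (M ^ (k + 1)), ← mul_assoc (M ^ k),
        ← pow_add, ← pow_add]
      have : k + 1 + (k + 1) = k + (k + 2) := by omega
      rw [this]
    calc v (k + 1) * v (k + 1)
        = ‖(M ^ (k + 1) * P)ᴴ * (M ^ (k + 1) * P)‖ :=
          (Matrix.l2_opNorm_conjTranspose_mul_self _).symm
      _ = ‖(M ^ k * P)ᴴ * (M ^ (k + 2) * P)‖ := by rw [e]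
      _ ≤ ‖(M ^ k * P)ᴴ‖ * ‖M ^ (k + 2) * P‖ := Matrix.l2_opNorm_mul _ _
      _ = v k * v (k + 2) := by rw [Matrix.l2_opNorm_conjTranspose]
  -- ‖XP‖² ≤ v 1
  have hXP : ‖X * P‖ * ‖X * P‖ ≤ v 1 := by
    have e : (X * P)ᴴ * (X * P) = P * (M * P) := by
      simp only [conjTranspose_mul, hPH, hM]
      rw [Matrix.mul_assoc P Xᴴ (X * P), ← Matrix.mul_assoc Xᴴ X P]
    calc ‖X * P‖ * ‖X * P‖
        = ‖(X * P)ᴴ * (X * P)‖ := (Matrix.l2_opNorm_conjTranspose_mul_self _).symm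
      _ = ‖P * (M * P)‖ := by rw [e]
      _ ≤ ‖P‖ * ‖M * P‖ := Matrix.l2_opNorm_mul _ _
      _ ≤ 1 * ‖M * P‖ := mul_le_mul_of_nonneg_right hPle1 (norm_nonneg _)
      _ = v 1 := by rw [one_mul]; simp [hv]
  have hqR : (0 : ℝ) < 2 * (q : ℝ) := by positivity
  -- main claim : v 1 ^ q ≤ v q, then conclude
  have main : ‖X * P‖ ^ (2 * q) ≤ v q := by
    by_cases h1 : v 1 = 0
    · have ht : ‖X * P‖ = 0 := by nlinarith [norm_nonneg (X * P), hXP]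
      rw [ht]
      rw [zero_pow (by omega)]
      exact hvnn q
    · have hv1pos : 0 < v 1 := lt_of_le_of_ne (hvnn 1) (Ne.symm h1)
      -- positivity of the whole sequence
      have hposS : ∀ k, 0 < v (k + 1) := by
        intro k
        induction k with
        | zero => exact hv1pos
        | succ k ih =>
          rcases lt_or_eq_of_le (hvnn (k + 2)) with h | h
          · exact h
          · exfalso
            have := key k
            rw [← h] at this
            nlinarith
      have hv0pos : 0 < v 0 := by
        rcases lt_or_eq_of_le (hvnn 0) with h | h
        · exact h
        · exfalso
          have := key 0
          rw [← h] at this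
          nlinarith
      -- ratio monotonicity step
      have Qstep : ∀ k, v 1 * v k ≤ v (k + 1) * v 0 := by
        intro k
        induction k with
        | zero => rw [mul_comm]
        | succ k ih =>
          have a : v 1 * v k * v (k + 1) ≤ v (k + 1) * v 0 * v (k + 1) :=
            mul_le_mul_of_nonneg_right ih (hvnn (k + 1))
          have c : v (k + 1) * v 0 * v (k + 1) ≤ v k * v (k + 2) * v 0 := by
            nlinarith [key k, hvnn 0]
          have d : v k * (v 1 * v (k + 1)) ≤ v k * (v (k + 2) * v 0) := by nlinarith
          rcases Nat.eq_zero_or_pos k with rfl | hk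
          · have := le_of_mul_le_mul_left (by linarith [d] : v 0 * (v 1 * v 1) ≤ v 0 * (v 2 * v 0)) hv0pos
            linarith
          · obtain ⟨j, rfl⟩ : ∃ j, k = j + 1 := ⟨k - 1, by omega⟩
            exact le_of_mul_le_mul_left d (hposS j)
      -- v 1 ^ (k+1) ≤ v (k+1)
      have Rstep : ∀ k, v 1 ^ (k + 1) ≤ v (k + 1) := by
        intro k
        induction k with
        | zero => rw [pow_one]
        | succ k ih =>
          calc v 1 ^ (k + 2) = v 1 * v 1 ^ (k + 1) := by ring
            _ ≤ v 1 * v (k + 1) := mul_le_mul_of_nonneg_left ih (le_of_lt hv1pos)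
            _ ≤ v (k + 2) * v 0 := Qstep (k + 1)
            _ ≤ v (k + 2) * 1 := mul_le_mul_of_nonneg_left hv0le1 (hvnn (k + 2))
            _ = v (k + 2) := mul_one _
      obtain ⟨p, rfl⟩ : ∃ p, q = p + 1 := ⟨q - 1, by omega⟩
      calc ‖X * P‖ ^ (2 * (p + 1)) = (‖X * P‖ * ‖X * P‖) ^ (p + 1) := by ring
        _ ≤ v 1 ^ (p + 1) := pow_le_pow_left₀ (mul_self_nonneg _) hXP _
        _ ≤ v (p + 1) := Rstep p
  -- conclude via rpow
  have hmono := Real.rpow_le_rpow (pow_nonneg (norm_nonneg (X * P)) (2 * q)) main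
    (le_of_lt (by positivity : (0:ℝ) < 1 / (2 * (q : ℝ))))
  have hid : (‖X * P‖ ^ (2 * q) : ℝ) ^ (1 / (2 * (q : ℝ))) = ‖X * P‖ := by
    rw [← Real.rpow_natCast ‖X * P‖ (2 * q), ← Real.rpow_mul (norm_nonneg _)]
    push_cast
    rw [mul_one_div, div_self (ne_of_gt hqR), Real.rpow_one]
  rw [hid] at hmono
  exact hmono
end

section
/- Let A be an n × n positive semidefinite complex matrix, let q ≥ 1 be a natural number, and let v be a vector in ℂⁿ with Euclidean norm ‖v‖ ≤ 1. Then (Re(vᴴ A v))^q ≤ Re(vᴴ A^q v). -/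
open Matrix
open scoped ComplexOrder

-- weighted Jensen with weights summing to ≤ 1
lemma jensen_aux {n : ℕ} (d p : Fin n → ℝ) (hd : ∀ i, 0 ≤ d i) (hp : ∀ i, 0 ≤ p i)
    (hs : ∑ i, p i ≤ 1) (q : ℕ) (hq : 1 ≤ q) :
    (∑ i, p i * d i) ^ q ≤ ∑ i, p i * d i ^ q := by
  set s := ∑ i, p i with hsdef
  have hs0 : 0 ≤ s := Finset.sum_nonneg fun i _ => hp i
  rcases eq_or_lt_of_le hs0 with h0 | h0
  · have hpz : ∀ i ∈ Finset.univ, p i = 0 :=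
      (Finset.sum_eq_zero_iff_of_nonneg (fun i _ => hp i)).1 h0.symm
    have h1 : (∑ i, p i * d i) = 0 :=
      Finset.sum_eq_zero fun i hi => by rw [hpz i hi, zero_mul]
    have h2 : (∑ i, p i * d i ^ q) = 0 :=
      Finset.sum_eq_zero fun i hi => by rw [hpz i hi, zero_mul]
    rw [h1, h2, zero_pow (by omega)]
  · have hsne : s ≠ 0 := ne_of_gt h0
    have key := Real.pow_arith_mean_le_arith_mean_pow Finset.univ (fun i => p i / s) d
      (fun i _ => div_nonneg (hp i) hs0)
      (by rw [← Finset.sum_div, ← hsdef, div_self hsne]) (fun i _ => hd i) q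
    have e1 : (∑ i, p i * d i) = s * ∑ i, p i / s * d i := by
      rw [Finset.mul_sum]
      exact Finset.sum_congr rfl fun i _ => by field_simp
    have e2 : (∑ i, p i / s * d i ^ q) = (∑ i, p i * d i ^ q) / s := by
      rw [Finset.sum_div]
      exact Finset.sum_congr rfl fun i _ => by ring
    calc (∑ i, p i * d i) ^ q = s ^ q * (∑ i, p i / s * d i) ^ q := by
          rw [e1, mul_pow]
      _ ≤ s ^ q * ∑ i, p i / s * d i ^ q :=
          mul_le_mul_of_nonneg_left key (pow_nonneg hs0 q)
      _ = s ^ (q - 1) * ∑ i, p i * d i ^ q := by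
          rw [e2]
          rw [show q = (q - 1) + 1 by omega, pow_succ, Nat.add_sub_cancel]
          field_simp
      _ ≤ ∑ i, p i * d i ^ q := by
          have hsum : 0 ≤ ∑ i, p i * d i ^ q :=
            Finset.sum_nonneg fun i _ => mul_nonneg (hp i) (pow_nonneg (hd i) q)
          exact mul_le_of_le_one_left hsum (pow_le_one₀ hs0 hs)

/-- Jensen-inequality step in Lemma 2 of the paper: for a positive semidefinite `n × n`
complex matrix `A`, `q ≥ 1` and a vector `v` with Euclidean norm at most 1,
`(Re (vᴴ A v))^q ≤ Re (vᴴ A^q v)`. -/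
theorem posSemidef_quadForm_pow_le {n : ℕ} (A : Matrix (Fin n) (Fin n) ℂ)
    (hA : A.PosSemidef) (q : ℕ) (hq : 1 ≤ q)
    (v : EuclideanSpace ℂ (Fin n)) (hv : ‖v‖ ≤ 1) :
    (star (WithLp.equiv 2 (Fin n → ℂ) v) ⬝ᵥ A.mulVec (WithLp.equiv 2 (Fin n → ℂ) v)).re ^ q ≤
      (star (WithLp.equiv 2 (Fin n → ℂ) v) ⬝ᵥ (A ^ q).mulVec (WithLp.equiv 2 (Fin n → ℂ) v)).re := by
  set x : Fin n → ℂ := WithLp.equiv 2 (Fin n → ℂ) v with hx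
  set U : Matrix (Fin n) (Fin n) ℂ := (Matrix.IsHermitian.eigenvectorUnitary hA.1 : Matrix (Fin n) (Fin n) ℂ) with hU
  set d : Fin n → ℝ := hA.1.eigenvalues with hd
  set w : Fin n → ℂ := (star U) *ᵥ x with hw
  have hUU : U * star U = 1 := (Matrix.mem_unitaryGroup_iff).mp (Matrix.IsHermitian.eigenvectorUnitary hA.1).2
  have hsUU : star U * U = 1 := (Matrix.mem_unitaryGroup_iff').mp (Matrix.IsHermitian.eigenvectorUnitary hA.1).2
  have hpow : ∀ k : ℕ, 1 ≤ k → A ^ k = U * diagonal (fun i => (d i : ℂ) ^ k) * star U := by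
    intro k hk
    induction k with
    | zero => omega
    | succ m ih =>
      rcases Nat.eq_or_lt_of_le hk with h1 | h1
      · have : m = 0 := by omega
        subst this
        simpa [Function.comp_def] using hA.1.spectral_theorem
      · have hm : 1 ≤ m := by omega
        have hA1 : A = U * diagonal (fun i => (d i : ℂ) ^ 1) * star U := by
          simpa [Function.comp_def] using hA.1.spectral_theorem
        rw [pow_succ, ih hm, hA1,
          Matrix.mul_assoc (U * diagonal (fun i => (d i : ℂ) ^ m)),
          ← Matrix.mul_assoc (star U), ← Matrix.mul_assoc (star U), hsUU, Matrix.one_mul,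
          ← Matrix.mul_assoc, Matrix.mul_assoc U, Matrix.diagonal_mul_diagonal]
        have hfun : (fun i => (d i : ℂ) ^ m * (d i) ^ 1) = (fun i => (d i : ℂ) ^ (m + 1)) := by
          funext i; ring
        rw [hfun]
  have hxw : ∀ M : Matrix (Fin n) (Fin n) ℂ,
      star x ⬝ᵥ (U * M * star U) *ᵥ x = star w ⬝ᵥ M *ᵥ w := by
    intro M
    simp only [hw, star_mulVec, Matrix.dotProduct_mulVec, Matrix.vecMul_vecMul,
      Matrix.mulVec_mulVec, Matrix.star_eq_conjTranspose, Matrix.conjTranspose_conjTranspose,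
      Matrix.mul_assoc]
  have hdiag : ∀ f : Fin n → ℂ, star w ⬝ᵥ (diagonal f) *ᵥ w
      = ∑ i, f i * ((Complex.normSq (w i) : ℝ) : ℂ) := by
    intro f
    simp only [dotProduct, Matrix.mulVec_diagonal, Pi.star_apply, RCLike.star_def]
    refine Finset.sum_congr rfl fun i _ => ?_
    rw [Complex.normSq_eq_conj_mul_self]
    ring
  set p : Fin n → ℝ := fun i => Complex.normSq (w i) with hp
  have hform : ∀ k, 1 ≤ k → (star x ⬝ᵥ (A ^ k) *ᵥ x).re = ∑ i, p i * d i ^ k := by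
    intro k hk
    rw [hpow k hk, hxw, hdiag]
    have e : ∀ i ∈ Finset.univ, ((d i : ℂ) ^ k * ((p i : ℝ) : ℂ)) = ((p i * d i ^ k : ℝ) : ℂ) := by
      intro i _; push_cast; ring
    rw [Finset.sum_congr rfl e, ← Complex.ofReal_sum, Complex.ofReal_re]
  have hps : ∑ i, p i ≤ 1 := by
    have h1 : star w ⬝ᵥ w = star x ⬝ᵥ x := by
      have := hxw 1
      simpa [hUU, Matrix.mul_one] using this.symm
    have h2 : ∑ i, p i = (star x ⬝ᵥ x).re := by
      rw [← h1]
      have : star w ⬝ᵥ w = ((∑ i, p i : ℝ) : ℂ) := by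
        simp only [dotProduct, Pi.star_apply, RCLike.star_def, Complex.ofReal_sum]
        exact Finset.sum_congr rfl fun i _ => by
          rw [hp]; rw [Complex.normSq_eq_conj_mul_self]
      rw [this, Complex.ofReal_re]
    have h3 : (star x ⬝ᵥ x).re = ∑ i, ‖x i‖ ^ 2 := by
      have : star x ⬝ᵥ x = ((∑ i, ‖x i‖ ^ 2 : ℝ) : ℂ) := by
        simp only [dotProduct, Pi.star_apply, RCLike.star_def, Complex.ofReal_sum]
        refine Finset.sum_congr rfl fun i _ => ?_
        rw [Complex.conj_mul']
        norm_cast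
      rw [this, Complex.ofReal_re]
    have h4 : ∑ i, ‖x i‖ ^ 2 = ‖v‖ ^ 2 := by
      rw [EuclideanSpace.norm_eq, Real.sq_sqrt (Finset.sum_nonneg fun i _ => sq_nonneg _)]
      rfl
    rw [h2, h3, h4]
    exact pow_le_one₀ (norm_nonneg v) hv
  have hL : (star x ⬝ᵥ A *ᵥ x).re = ∑ i, p i * d i := by
    have := hform 1 le_rfl
    simpa using this
  have hR := hform q hq
  rw [hL, hR]
  exact jensen_aux d p (hA.eigenvalues_nonneg) (fun i => Complex.normSq_nonneg _) hps q hq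
end

section
/- Every m × n quaternion matrix X admits a quaternion singular value decomposition: there exist an m × m quaternion matrix U with Uᴴ U = I, an n × n quaternion matrix V with Vᴴ V = I, and a real-valued function σ on indices with σ₁ ≥ σ₂ ≥ … ≥ 0 such that X = U · Σ · Vᴴ, where Σ is the m × n matrix whose (i,j) entry equals the quaternion embedding of σᵢ when i = j and 0 otherwise. -/
open Matrix
open scoped Quaternion

noncomputable section
namespace QSVD

abbrev H := ℍ[ℝ]

def hdot {n : ℕ} (x y : Fin n → H) : H := ∑ j, star (x j) * y j

def gq {n : ℕ} (v : Fin n → H) : ℝ := ∑ j, Quaternion.normSq (v j)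

section basic
variable {n : ℕ}

theorem star_hdot (x y : Fin n → H) : star (hdot x y) = hdot y x := by
  simp [hdot, star_sum]

theorem coe_sum {α : Type*} (s : Finset α) (f : α → ℝ) :
    ((∑ a ∈ s, f a : ℝ) : H) = ∑ a ∈ s, ((f a : ℝ) : H) := by
  classical
  induction s using Finset.induction with
  | empty => simp
  | insert _ _ h ih => simp [Finset.sum_insert h, Quaternion.coe_add, ih]

theorem hdot_self (x : Fin n → H) :
    hdot x x = ((gq x : ℝ) : H) := by
  simp only [gq]
  rw [hdot, coe_sum]
  simp [Quaternion.star_mul_self]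

theorem hdot_mul_right (x y : Fin n → H) (q : H) :
    hdot x (fun j => y j * q) = hdot x y * q := by
  simp [hdot, Finset.sum_mul, mul_assoc]

theorem hdot_mul_left (x y : Fin n → H) (q : H) :
    hdot (fun j => x j * q) y = star q * hdot x y := by
  simp [hdot, Finset.mul_sum, mul_assoc]

theorem hdot_sub_right (x y z : Fin n → H) : hdot x (y - z) = hdot x y - hdot x z := by
  simp [hdot, mul_sub, Finset.sum_sub_distrib]

theorem hdot_sum_right {α : Type*} (s : Finset α) (x : Fin n → H) (f : α → (Fin n → H)) :
    hdot x (∑ a ∈ s, f a) = ∑ a ∈ s, hdot x (f a) := by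
  simp only [hdot, Finset.sum_apply, Finset.mul_sum]
  rw [Finset.sum_comm]

/-- one-step Gram-Schmidt extension -/
theorem extend_one {k : ℕ} (hk : k < n) (w : Fin k → (Fin n → H))
    (hw : ∀ a b, hdot (w a) (w b) = if a = b then 1 else 0) :
    ∃ w' : Fin (k + 1) → (Fin n → H),
      (∀ a b, hdot (w' a) (w' b) = if a = b then 1 else 0) ∧
      ∀ a : Fin k, w' a.castSucc = w a := by
  classical
  set P : (Fin n → H) → (Fin n → H) :=
    fun x => fun j => x j - ∑ a, w a j * hdot (w a) x with hP
  have hPo : ∀ x (b : Fin k), hdot (w b) (P x) = 0 := by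
    intro x b
    have hPeq : P x = x - ∑ a, (fun j => w a j * hdot (w a) x) := by
      funext j
      simp [hP, Finset.sum_apply]
    have expand : hdot (w b) (P x)
        = hdot (w b) x - ∑ a, hdot (w b) (w a) * hdot (w a) x := by
      rw [hPeq, hdot_sub_right, hdot_sum_right]
      congr 1
      exact Finset.sum_congr rfl fun a _ => hdot_mul_right _ _ _
    rw [expand]
    rw [Finset.sum_eq_single b]
    · simp [hw b b]
    · intro a _ hab; simp [hw b a, (Ne.symm hab : ¬ b = a)]
    · intro habs; exact absurd (Finset.mem_univ b) habs
  -- find a vector not killed by P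
  have hex : ∃ x, P x ≠ 0 := by
    by_contra hcon
    push_neg at hcon
    have hspan : ∀ y : Fin n → H,
        y ∈ Submodule.span H (Set.range fun a => (fun j => star (w a j))) := by
      intro y
      have hx := hcon (fun j => star (y j))
      have hy : y = ∑ a, star (hdot (w a) (fun j => star (y j))) • (fun j => star (w a j)) := by
        funext j
        have := congrFun hx j
        simp only [hP, Pi.zero_apply, sub_eq_zero] at this
        have : star (y j) = ∑ a, w a j * hdot (w a) fun j => star (y j) := this
        calc y j = star (star (y j)) := by simp
          _ = star (∑ a, w a j * hdot (w a) fun j => star (y j)) := by rw [← this]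
          _ = ∑ a, star (hdot (w a) fun j => star (y j)) * star (w a j) := by
              rw [star_sum]
              exact Finset.sum_congr rfl fun a _ => StarMul.star_mul _ _
          _ = (∑ a, star (hdot (w a) (fun j => star (y j))) • (fun j => star (w a j))) j := by
              rw [Finset.sum_apply]; simp [smul_eq_mul]
      rw [hy]
      exact Submodule.sum_mem _ fun a _ =>
        Submodule.smul_mem _ _ (Submodule.subset_span (Set.mem_range_self a))
    have htop : Submodule.span H (Set.range fun a => (fun j : Fin n => star (w a j))) = ⊤ :=
      eq_top_iff.mpr fun y _ => hspan y
    have hle := finrank_le_of_span_eq_top htop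
    rw [Module.finrank_pi] at hle
    simp [Fintype.card_fin] at hle
    omega
  obtain ⟨x₀, hx₀⟩ := hex
  set r : ℝ := ∑ j, Quaternion.normSq (P x₀ j) with hr
  have hrpos : 0 < r := by
    rcases (Finset.sum_nonneg fun j _ => Quaternion.normSq_nonneg (a := P x₀ j)).lt_or_eq with h | h
    · exact h
    · exfalso; apply hx₀
      funext j
      have := (Finset.sum_eq_zero_iff_of_nonneg
        (fun j _ => Quaternion.normSq_nonneg (a := P x₀ j))).mp h.symm j (Finset.mem_univ j)
      exact Quaternion.normSq_eq_zero.mp this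
  set s := Real.sqrt r with hs
  have hspos : 0 < s := Real.sqrt_pos.mpr hrpos
  set wnew : Fin n → H := fun j => P x₀ j * ((s⁻¹ : ℝ) : H) with hwnew
  have hnew_unit : hdot wnew wnew = 1 := by
    rw [hwnew]
    rw [hdot_mul_right, hdot_mul_left, hdot_self, show gq (P x₀) = r from hr.symm]
    rw [Quaternion.star_coe]
    rw [← Quaternion.coe_mul, ← Quaternion.coe_mul]
    have hss : s * s = r := Real.mul_self_sqrt hrpos.le
    rw [show s⁻¹ * r * s⁻¹ = 1 by rw [← hss]; field_simp]
    exact Quaternion.coe_one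
  have hnew_orth : ∀ b : Fin k, hdot (w b) wnew = 0 := by
    intro b
    rw [hwnew, hdot_mul_right, hPo x₀ b, zero_mul]
  refine ⟨Fin.snoc w wnew, ?_, fun a => by simp⟩
  intro a b
  refine Fin.lastCases ?_ ?_ a
  · refine Fin.lastCases ?_ ?_ b
    · simp [Fin.snoc_last, hnew_unit]
    · intro b'
      rw [Fin.snoc_last, Fin.snoc_castSucc]
      rw [← star_hdot, hnew_orth b', star_zero]
      simp [(Fin.castSucc_lt_last b').ne']
  · intro a'
    refine Fin.lastCases ?_ ?_ b
    · rw [Fin.snoc_last, Fin.snoc_castSucc, hnew_orth a']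
      simp [(Fin.castSucc_lt_last a').ne]
    · intro b'
      rw [Fin.snoc_castSucc, Fin.snoc_castSucc, hw a' b']
      simp [Fin.castSucc_inj]

end basic

def vecMulLin {a b : ℕ} (A : Matrix (Fin a) (Fin b) H) : (Fin a → H) →ₗ[H] (Fin b → H) where
  toFun v := Matrix.vecMul v A
  map_add' u v := Matrix.add_vecMul A u v
  map_smul' c v := Matrix.smul_vecMul c v A

theorem hmul_comm {k : ℕ} (A B : Matrix (Fin k) (Fin k) H) (h : A * B = 1) : B * A = 1 := by
  have hgf : ∀ v, vecMulLin B (vecMulLin A v) = v := by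
    intro v
    simp [vecMulLin, Matrix.vecMul_vecMul, h, Matrix.vecMul_one]
  have hinj : Function.Injective (vecMulLin A) := by
    intro u v huv
    have := hgf u; rw [huv, hgf v] at this; exact this.symm
  have hsurj : Function.Surjective (vecMulLin A) :=
    (LinearMap.injective_iff_surjective).mp hinj
  have hfg : ∀ w, vecMulLin A (vecMulLin B w) = w := by
    intro w
    obtain ⟨u, rfl⟩ := hsurj w
    rw [hgf]
  have key : ∀ w : Fin k → H, Matrix.vecMul w (B * A) = w := by
    intro w
    have := hfg w
    simpa [vecMulLin, Matrix.vecMul_vecMul] using this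
  refine Matrix.ext fun i j => ?_
  have := congrFun (key (Pi.single i 1)) j
  simp only [Matrix.vecMul, dotProduct, Pi.single_apply, ite_mul, one_mul, zero_mul,
    Finset.mem_univ, if_true] at this
  rw [Finset.sum_ite_eq' Finset.univ i (fun x => (B * A) x j)] at this
  simp only [Finset.mem_univ, if_true] at this
  rw [this, Matrix.one_apply]
  simp [eq_comm]
theorem extend_many {n : ℕ} (d : ℕ) : ∀ (k : ℕ) (hkd : k + d = n) (w : Fin k → (Fin n → H)),
    (∀ a b, hdot (w a) (w b) = if a = b then 1 else 0) →
    ∃ v : Fin n → (Fin n → H),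
      (∀ a b, hdot (v a) (v b) = if a = b then 1 else 0) ∧
      ∀ a : Fin k, v (Fin.castLE (by omega) a) = w a := by
  induction d with
  | zero =>
    intro k hkn w hw
    subst hkn
    refine ⟨w, hw, fun a => ?_⟩
    congr 1
  | succ d ih =>
    intro k hkn w hw
    obtain ⟨w', hw', hwc⟩ := extend_one (by omega : k < n) w hw
    obtain ⟨v, hv, hvc⟩ := ih (k + 1) (by omega) w' hw'
    refine ⟨v, hv, fun a => ?_⟩
    have h1 : (Fin.castLE (by omega : k ≤ n) a) =
        Fin.castLE (by omega : k + 1 ≤ n) (a.castSucc) := by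
      apply Fin.ext; simp
    rw [h1, hvc a.castSucc, hwc a]

/-- extend a unit vector to a unitary matrix having it as column 0 -/
theorem unit_to_unitary {n : ℕ} (hn : 0 < n) (v₀ : Fin n → H) (hv : hdot v₀ v₀ = 1) :
    ∃ V : Matrix (Fin n) (Fin n) H, Vᴴ * V = 1 ∧ V * Vᴴ = 1 ∧
      (∀ i, V i ⟨0, hn⟩ = v₀ i) ∧
      (∀ a b : Fin n, hdot (fun i => V i a) (fun i => V i b) = if a = b then 1 else 0) := by
  have hw : ∀ a b : Fin 1, hdot ((fun _ => v₀) a) ((fun _ => v₀) b) = if a = b then 1 else 0 := by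
    intro a b
    have : a = b := Subsingleton.elim a b
    simp [this, hv]
  obtain ⟨v, hvon, hvc⟩ := extend_many (n - 1) 1 (by omega) (fun _ => v₀) hw
  set V : Matrix (Fin n) (Fin n) H := fun i a => v a i with hV
  have hcol : ∀ a b : Fin n, hdot (fun i => V i a) (fun i => V i b) = if a = b then 1 else 0 := by
    intro a b; exact hvon a b
  have hUU : Vᴴ * V = 1 := by
    refine Matrix.ext fun a b => ?_
    rw [Matrix.mul_apply, Matrix.one_apply]
    have := hcol a b
    simpa [hdot, Matrix.conjTranspose_apply] using this
  refine ⟨V, hUU, hmul_comm _ _ hUU, fun i => ?_, hcol⟩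
  have h0 : (⟨0, hn⟩ : Fin n) = Fin.castLE (by omega) (⟨0, by omega⟩ : Fin 1) := by
    apply Fin.ext; simp
  rw [hV, h0]
  exact congrFun (hvc ⟨0, by omega⟩) i

theorem gq_nonneg (v : Fin n → H) : 0 ≤ gq v :=
  Finset.sum_nonneg fun j _ => Quaternion.normSq_nonneg

theorem gq_eq_zero {v : Fin n → H} (h : gq v = 0) : v = 0 := by
  funext j
  exact Quaternion.normSq_eq_zero.mp ((Finset.sum_eq_zero_iff_of_nonneg
    (fun j _ => Quaternion.normSq_nonneg)).mp h j (Finset.mem_univ j))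

theorem gq_smul (t : ℝ) (v : Fin n → H) : gq (t • v) = t ^ 2 * gq v := by
  simp [gq, Quaternion.normSq_smul, Finset.mul_sum]

theorem continuous_gq : Continuous (gq : (Fin n → H) → ℝ) :=
  continuous_finset_sum _ fun j _ => Quaternion.continuous_normSq.comp (continuous_apply j)

theorem continuous_mulVec (X : Matrix (Fin m) (Fin n) H) :
    Continuous fun v : Fin n → H => X.mulVec v := by
  have heq : (fun v : Fin n → H => X.mulVec v) = fun v => fun i => ∑ j, X i j * v j := by
    funext v i; rfl
  rw [heq]
  exact continuous_pi fun i =>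
    continuous_finset_sum _ fun j _ => continuous_const.mul (continuous_apply j)

theorem exists_max (hn : 0 < n) (X : Matrix (Fin m) (Fin n) H) :
    ∃ v₀, gq v₀ = 1 ∧ ∀ v, gq v = 1 → gq (X.mulVec v) ≤ gq (X.mulVec v₀) := by
  set S : Set (Fin n → H) := {v | gq v = 1} with hS
  have hclosed : IsClosed S := isClosed_eq continuous_gq continuous_const
  have hbdd : Bornology.IsBounded S := by
    rw [Metric.isBounded_iff_subset_closedBall 0]
    refine ⟨1, fun v hv => ?_⟩
    simp only [Metric.mem_closedBall, dist_zero_right]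
    rw [pi_norm_le_iff_of_nonneg zero_le_one]
    intro j
    have h1 : Quaternion.normSq (v j) ≤ 1 := by
      have hsum := Finset.single_le_sum (f := fun j => Quaternion.normSq (v j))
        (fun j _ => Quaternion.normSq_nonneg) (Finset.mem_univ j)
      have hv1 : gq v = 1 := hv
      simp only [gq] at hv1
      exact le_of_le_of_eq (by simpa using hsum) hv1
    rw [Quaternion.normSq_eq_norm_mul_self] at h1
    nlinarith [norm_nonneg (v j)]
  have hcompact : IsCompact S := Metric.isCompact_of_isClosed_isBounded hclosed hbdd
  have hne : S.Nonempty := by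
    refine ⟨Pi.single ⟨0, hn⟩ 1, ?_⟩
    simp only [hS, Set.mem_setOf_eq, gq]
    rw [Finset.sum_eq_single ⟨0, hn⟩]
    · simp
    · intro b _ hb; simp [Pi.single_apply, hb]
    · simp
  obtain ⟨v₀, hv₀S, hmax⟩ := hcompact.exists_isMaxOn hne
    ((continuous_gq.comp (continuous_mulVec X)).continuousOn)
  exact ⟨v₀, hv₀S, fun v hv => hmax hv⟩

theorem max_scaled {X : Matrix (Fin m) (Fin n) H} {v₀ : Fin n → H}
    (hmax : ∀ v, gq v = 1 → gq (X.mulVec v) ≤ gq (X.mulVec v₀)) :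
    ∀ v, gq (X.mulVec v) ≤ gq (X.mulVec v₀) * gq v := by
  intro v
  rcases eq_or_lt_of_le (gq_nonneg v) with h0 | hpos
  · rw [gq_eq_zero h0.symm]
    simp [Matrix.mulVec_zero, gq, ← h0]
  · set t : ℝ := (Real.sqrt (gq v))⁻¹ with ht
    have hsq : Real.sqrt (gq v) ^ 2 = gq v := Real.sq_sqrt (le_of_lt hpos)
    have hsqrtpos : 0 < Real.sqrt (gq v) := Real.sqrt_pos.mpr hpos
    have hunit : gq (t • v) = 1 := by
      rw [gq_smul, ht, ← hsq]
      field_simp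
      rw [Real.sq_sqrt (sq_nonneg _)]
    have h1 := hmax (t • v) hunit
    rw [Matrix.mulVec_smul, gq_smul] at h1
    have ht2 : t ^ 2 = (gq v)⁻¹ := by rw [ht, ← hsq]; simp [hsq]
    rw [ht2] at h1
    calc gq (X.mulVec v) = gq v * ((gq v)⁻¹ * gq (X.mulVec v)) := by field_simp
    _ ≤ gq v * gq (X.mulVec v₀) := by
        exact mul_le_mul_of_nonneg_left h1 (le_of_lt hpos)
    _ = gq (X.mulVec v₀) * gq v := mul_comm _ _

theorem re_sum (s : Finset (Fin m)) (f : Fin m → H) : (∑ i ∈ s, f i).re = ∑ i ∈ s, (f i).re := by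
  classical
  induction s using Finset.induction with
  | empty => simp
  | insert _ _ h ih => simp [Finset.sum_insert h, ih]

theorem star_real_smul (t : ℝ) (x : H) : star (t • x) = t • star x := by
  ext <;> simp

theorem gq_add_smul (a b : Fin m → H) (t : ℝ) :
    gq (a + t • b) = gq a + t ^ 2 * gq b + 2 * t * ∑ i, (a i * star (b i)).re := by
  have hterm : ∀ i, Quaternion.normSq (a i + t • b i)
      = Quaternion.normSq (a i) + t ^ 2 * Quaternion.normSq (b i)
        + 2 * t * (a i * star (b i)).re := by
    intro i
    rw [Quaternion.normSq_add, Quaternion.normSq_smul]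
    have : (a i * star (t • b i)).re = t * (a i * star (b i)).re := by
      rw [star_real_smul, mul_smul_comm, Quaternion.re_smul, smul_eq_mul]
    rw [this]; ring
  simp only [gq, Pi.add_apply, Pi.smul_apply, hterm]
  rw [Finset.sum_add_distrib, Finset.sum_add_distrib, ← Finset.mul_sum, ← Finset.mul_sum]

theorem re_pairing (a b : Fin m → H) (q : H) :
    ∑ i, (a i * star (b i * q)).re = (hdot a b * q).re := by
  rw [hdot, Finset.sum_mul, re_sum]
  refine Finset.sum_congr rfl fun i _ => ?_
  simp only [Quaternion.re_mul, Quaternion.imI_mul, Quaternion.imJ_mul, Quaternion.imK_mul,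
    Quaternion.re_star, Quaternion.imI_star, Quaternion.imJ_star, Quaternion.imK_star]
  ring

theorem zero_of_ineq {r K : ℝ} (h : ∀ t : ℝ, 2 * t * r ≤ t ^ 2 * K) : r = 0 := by
  by_contra hr
  have hr2 : 0 < r ^ 2 := by positivity
  set C : ℝ := |K| + 1 with hC
  have hCpos : 0 < C := by positivity
  have hKC : K ≤ C := by rw [hC]; linarith [le_abs_self K]
  have h1 := h (r / C)
  have hrC : (r / C) ^ 2 * K ≤ (r / C) ^ 2 * C :=
    mul_le_mul_of_nonneg_left hKC (by positivity)
  have h2 : 2 * (r / C) * r ≤ (r / C) ^ 2 * C := le_trans h1 hrC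
  rw [div_pow] at h2
  have h3 : (r ^ 2 / C ^ 2) * C = r ^ 2 / C := by field_simp
  rw [h3] at h2
  have h4 : 2 * (r / C) * r = 2 * (r ^ 2 / C) := by ring
  rw [h4] at h2
  have h5 : 0 < r ^ 2 / C := by positivity
  linarith

theorem mulVec_mul_quat (X : Matrix (Fin m) (Fin n) H) (w : Fin n → H) (q : H) :
    X.mulVec (fun j => w j * q) = fun i => X.mulVec w i * q := by
  funext i
  simp [Matrix.mulVec, dotProduct, Finset.sum_mul, mul_assoc]

theorem key_orth (X : Matrix (Fin m) (Fin n) H) (v₀ : Fin n → H)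
    (hunit : gq v₀ = 1)
    (hmax : ∀ v, gq (X.mulVec v) ≤ gq (X.mulVec v₀) * gq v)
    (w : Fin n → H) (horth : hdot v₀ w = 0) :
    hdot (X.mulVec v₀) (X.mulVec w) = 0 := by
  set p : H := hdot (X.mulVec v₀) (X.mulVec w) with hp
  have hstar : star (hdot w v₀) = hdot v₀ w := by
    rw [hdot, hdot, star_sum]
    exact Finset.sum_congr rfl fun j _ => by rw [StarMul.star_mul, star_star]
  have key : ∀ q : H, (p * q).re = 0 := by
    intro q
    -- perturbation in direction (fun j => w j * q)
    set wq : Fin n → H := fun j => w j * q with hwq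
    have hvorth : ∑ j, (v₀ j * star (wq j)).re = 0 := by
      rw [hwq, re_pairing v₀ w q, horth, zero_mul]
      simp
    have hineq : ∀ t : ℝ, 2 * t * (p * q).re ≤ t ^ 2 *
        (gq (X.mulVec v₀) * gq wq - gq (X.mulVec wq)) := by
      intro t
      have h1 := hmax (v₀ + t • wq)
      rw [Matrix.mulVec_add, Matrix.mulVec_smul] at h1
      rw [gq_add_smul, gq_add_smul, hunit, hvorth] at h1
      have hXwq : X.mulVec wq = fun i => X.mulVec w i * q := mulVec_mul_quat X w q
      have hre : ∑ i, (X.mulVec v₀ i * star (X.mulVec wq i)).re = (p * q).re := by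
        rw [hXwq]
        exact re_pairing (X.mulVec v₀) (X.mulVec w) q
      rw [hre] at h1
      nlinarith [h1]
    have := zero_of_ineq (r := (p * q).re)
      (K := gq (X.mulVec v₀) * gq wq - gq (X.mulVec wq))
      (fun t => hineq t)
    exact this
  have h1 := key 1
  have hi := key ⟨0, 1, 0, 0⟩
  have hj := key ⟨0, 0, 1, 0⟩
  have hk := key ⟨0, 0, 0, 1⟩
  simp only [Quaternion.re_mul] at h1 hi hj hk
  ext <;> simp_all
  · simpa using key ⟨0, 1, 0, 0⟩
  · simpa using key ⟨0, 0, 1, 0⟩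
  · simpa using key ⟨0, 0, 0, 1⟩
/-- block matrix [[c, 0], [0, A]] -/
def blkc {k l : ℕ} (c : H) (A : Matrix (Fin k) (Fin l) H) :
    Matrix (Fin (k + 1)) (Fin (l + 1)) H :=
  Matrix.of fun i j =>
    Fin.cases (Fin.cases c (fun _ => 0) j) (fun a => Fin.cases 0 (fun b => A a b) j) i

@[simp] theorem blkc_00 {k l : ℕ} (c : H) (A : Matrix (Fin k) (Fin l) H) :
    blkc c A 0 0 = c := rfl
@[simp] theorem blkc_0s {k l : ℕ} (c : H) (A : Matrix (Fin k) (Fin l) H) (b : Fin l) :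
    blkc c A 0 b.succ = 0 := rfl
@[simp] theorem blkc_s0 {k l : ℕ} (c : H) (A : Matrix (Fin k) (Fin l) H) (a : Fin k) :
    blkc c A a.succ 0 = 0 := rfl
@[simp] theorem blkc_ss {k l : ℕ} (c : H) (A : Matrix (Fin k) (Fin l) H) (a : Fin k) (b : Fin l) :
    blkc c A a.succ b.succ = A a b := rfl

theorem blkc_mul {k l r : ℕ} (c d : H) (A : Matrix (Fin k) (Fin l) H)
    (B : Matrix (Fin l) (Fin r) H) : blkc c A * blkc d B = blkc (c * d) (A * B) := by
  refine Matrix.ext fun i j => ?_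
  rw [Matrix.mul_apply, Fin.sum_univ_succ]
  refine Fin.cases ?_ (fun a => ?_) i <;> refine Fin.cases ?_ (fun b => ?_) j <;>
    simp [Matrix.mul_apply]

theorem blkc_conjT {k l : ℕ} (c : H) (A : Matrix (Fin k) (Fin l) H) :
    (blkc c A)ᴴ = blkc (star c) Aᴴ := by
  refine Matrix.ext fun i j => ?_
  rw [Matrix.conjTranspose_apply]
  refine Fin.cases ?_ (fun a => ?_) i <;> refine Fin.cases ?_ (fun b => ?_) j <;>
    simp [Matrix.conjTranspose_apply]

theorem blkc_one {k : ℕ} : blkc 1 (1 : Matrix (Fin k) (Fin k) H) = 1 := by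
  refine Matrix.ext fun i j => ?_
  refine Fin.cases ?_ (fun a => ?_) i <;> refine Fin.cases ?_ (fun b => ?_) j <;>
    simp [Matrix.one_apply, Fin.succ_ne_zero, (Fin.succ_ne_zero _).symm, Fin.succ_inj]

theorem hdot_mulVec_unitary {k : ℕ} (W : Matrix (Fin k) (Fin k) H) (hW : Wᴴ * W = 1)
    (x y : Fin k → H) : hdot (W.mulVec x) (W.mulVec y) = hdot x y := by
  classical
  have hWab : ∀ a b, (∑ i, star (W i a) * W i b) = if a = b then (1 : H) else 0 := by
    intro a b
    have := congrFun (congrFun hW a) b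
    simpa [Matrix.mul_apply, Matrix.conjTranspose_apply, Matrix.one_apply] using this
  have step1 : hdot (W.mulVec x) (W.mulVec y)
      = ∑ i, ∑ a, ∑ b, star (x a) * (star (W i a) * (W i b * y b)) := by
    simp only [hdot, Matrix.mulVec, dotProduct]
    refine Finset.sum_congr rfl fun i _ => ?_
    rw [star_sum, Finset.sum_mul]
    refine Finset.sum_congr rfl fun a _ => ?_
    rw [StarMul.star_mul, Finset.mul_sum]
    refine Finset.sum_congr rfl fun b _ => ?_
    simp [mul_assoc]
  rw [step1, Finset.sum_comm]
  have step2 : ∀ a, ∑ i, ∑ b, star (x a) * (star (W i a) * (W i b * y b))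
      = ∑ b, star (x a) * ((∑ i, star (W i a) * W i b) * y b) := by
    intro a
    rw [Finset.sum_comm]
    refine Finset.sum_congr rfl fun b _ => ?_
    rw [Finset.sum_mul, Finset.mul_sum]
    refine Finset.sum_congr rfl fun i _ => ?_
    simp [mul_assoc]
  rw [Finset.sum_congr rfl fun a _ => step2 a]
  simp only [hWab, ite_mul, one_mul, zero_mul, mul_ite, mul_zero]
  simp [hdot, Finset.sum_ite_eq]
theorem coe_H_injective : Function.Injective (fun r : ℝ => (r : H)) := by
  intro a b hab
  have := congrArg QuaternionAlgebra.re hab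
  simpa using this


theorem hdot_smul_right {n : ℕ} (x y : Fin n → H) (c : ℝ) :
    hdot x (c • y) = c • hdot x y := by
  simp [hdot, Finset.smul_sum, mul_smul_comm]

theorem hdot_smul_left {n : ℕ} (x y : Fin n → H) (c : ℝ) :
    hdot (c • x) y = c • hdot x y := by
  simp only [hdot, Pi.smul_apply, star_real_smul, smul_mul_assoc, Finset.smul_sum]

theorem coe_smul_one (r : ℝ) : r • (1 : H) = (r : H) := by
  ext <;> simp

theorem gq_mulVec_unitary {k : ℕ} (W : Matrix (Fin k) (Fin k) H) (hW : Wᴴ * W = 1)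
    (x : Fin k → H) : gq (W.mulVec x) = gq x := by
  have h := hdot_mulVec_unitary W hW x x
  rw [hdot_self, hdot_self] at h
  exact coe_H_injective h

theorem gq_cons0 {k : ℕ} (x : Fin k → H) : gq (Fin.cons 0 x) = gq x := by
  simp [gq, Fin.sum_univ_succ]

theorem main (n : ℕ) : ∀ (m : ℕ) (X : Matrix (Fin m) (Fin n) H),
    ∃ (U : Matrix (Fin m) (Fin m) H) (V : Matrix (Fin n) (Fin n) H) (σ : ℕ → ℝ),
      Uᴴ * U = 1 ∧ Vᴴ * V = 1 ∧ (∀ i, 0 ≤ σ i) ∧ (∀ i j, i ≤ j → σ j ≤ σ i) ∧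
      X = U * (Matrix.of fun (i : Fin m) (j : Fin n) =>
        if (i : ℕ) = (j : ℕ) then ((σ (i : ℕ) : ℝ) : H) else 0) * Vᴴ ∧
      (∀ c : ℝ, 0 ≤ c → (∀ v, gq (X.mulVec v) ≤ c * gq v) → ∀ i, σ i ^ 2 ≤ c) := by
  induction n with
  | zero =>
    intro m X
    refine ⟨1, 1, fun _ => 0, by simp, by simp, fun _ => le_refl 0,
      fun _ _ _ => le_refl 0, ?_, ?_⟩
    · exact Matrix.ext fun i j => j.elim0
    · intro c hc _ i; simpa using hc
  | succ n' ih =>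
    intro m
    cases m with
    | zero =>
      intro X
      refine ⟨1, 1, fun _ => 0, by simp, by simp, fun _ => le_refl 0,
        fun _ _ _ => le_refl 0, ?_, ?_⟩
      · exact Matrix.ext fun i j => i.elim0
      · intro c hc _ i; simpa using hc
    | succ m' =>
      intro X
      obtain ⟨v₀, hv₀1, hmaxS⟩ := exists_max (Nat.succ_pos n') X
      have hmax := max_scaled hmaxS
      set μ : ℝ := gq (X.mulVec v₀) with hμ
      have hμ0 : 0 ≤ μ := gq_nonneg _
      rcases eq_or_lt_of_le hμ0 with hzero | hpos
      · -- the matrix is zero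
        have hX0 : ∀ i j, X i j = 0 := by
          intro i j
          have h1 := hmax (Pi.single j 1)
          rw [← hzero, zero_mul] at h1
          have hmv : X.mulVec (Pi.single j 1) = fun i => X i j := by
            funext i
            simp only [Matrix.mulVec, dotProduct]
            rw [Finset.sum_eq_single j]
            · simp
            · intro b _ hb; simp [Pi.single_apply, hb]
            · simp
          rw [hmv] at h1
          have h2 : gq (fun i => X i j) = 0 := le_antisymm h1 (gq_nonneg _)
          exact congrFun (gq_eq_zero h2) i
        refine ⟨1, 1, fun _ => 0, by simp, by simp, fun _ => le_refl 0,
          fun _ _ _ => le_refl 0, ?_, ?_⟩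
        · refine Matrix.ext fun i j => ?_
          rw [Matrix.conjTranspose_one, Matrix.mul_one, Matrix.one_mul, hX0 i j]
          simp
        · intro c hc _ i; simpa using hc
      · -- positive top singular value
        set σ₁ : ℝ := Real.sqrt μ with hσ₁
        have hσ₁pos : 0 < σ₁ := Real.sqrt_pos.mpr hpos
        have hσ₁sq : σ₁ ^ 2 = μ := Real.sq_sqrt hμ0
        have hv₀unit : hdot v₀ v₀ = 1 := by
          rw [hdot_self, hv₀1]; exact Quaternion.coe_one
        set u₀ : Fin (m' + 1) → H := σ₁⁻¹ • X.mulVec v₀ with hu₀def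
        have hXv₀ : X.mulVec v₀ = σ₁ • u₀ := by
          rw [hu₀def, smul_smul, mul_inv_cancel₀ hσ₁pos.ne', one_smul]
        have hu₀1 : gq u₀ = 1 := by
          rw [hu₀def, gq_smul, inv_pow, hσ₁sq, ← hμ]
          field_simp
        have hu₀unit : hdot u₀ u₀ = 1 := by
          rw [hdot_self, hu₀1]; exact Quaternion.coe_one
        obtain ⟨V', hV'1, hV'2, hVcol0, hVon⟩ :=
          unit_to_unitary (Nat.succ_pos n') v₀ hv₀unit
        obtain ⟨U', hU'1, hU'2, hUcol0, hUon⟩ :=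
          unit_to_unitary (Nat.succ_pos m') u₀ hu₀unit
        have hVc0 : (fun i => V' i 0) = v₀ := funext fun i => hVcol0 i
        have hUc0 : (fun i => U' i 0) = u₀ := funext fun i => hUcol0 i
        set Y : Matrix (Fin (m'+1)) (Fin (n'+1)) H := U'ᴴ * X * V' with hYdef
        have hYapply : ∀ i j, Y i j = hdot (fun a => U' a i) (X.mulVec fun b => V' b j) := by
          intro i j
          rw [hYdef, Matrix.mul_assoc, Matrix.mul_apply]
          simp only [hdot, Matrix.conjTranspose_apply, Matrix.mul_apply, Matrix.mulVec,
            dotProduct]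
        have hYcol0 : ∀ i, Y i 0 = if i = 0 then ((σ₁ : ℝ) : H) else 0 := by
          intro i
          rw [hYapply i 0, show (fun b => V' b 0) = v₀ from hVc0, hXv₀, hdot_smul_right]
          have h2 : hdot (fun a => U' a i) u₀ = if i = 0 then 1 else 0 := by
            rw [← hUc0]; exact hUon i 0
          rw [h2]
          split
          · exact coe_smul_one σ₁
          · exact smul_zero σ₁
        have hYrow0 : ∀ b : Fin n', Y 0 b.succ = 0 := by
          intro b
          rw [hYapply 0 b.succ, show (fun a => U' a 0) = u₀ from hUc0, hu₀def, hdot_smul_left]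
          have horth : hdot v₀ (fun a => V' a b.succ) = 0 := by
            rw [show v₀ = (fun i => V' i 0) from hVc0.symm]
            have h3 := hVon 0 b.succ
            simpa [(Fin.succ_ne_zero b).symm] using h3
          rw [key_orth X v₀ hv₀1 hmax _ horth, smul_zero]
        set B : Matrix (Fin m') (Fin n') H := Matrix.of fun a b => Y a.succ b.succ with hBdef
        have hYblk : Y = blkc ((σ₁ : ℝ) : H) B := by
          refine Matrix.ext fun i j => ?_
          refine Fin.cases ?_ (fun a => ?_) i <;> refine Fin.cases ?_ (fun b => ?_) j
          · rw [hYcol0 0]; simp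
          · rw [hYrow0 b]; simp
          · rw [hYcol0 a.succ]; simp [Fin.succ_ne_zero]
          · simp [hBdef]
        have hX' : X = U' * Y * V'ᴴ := by
          rw [hYdef]
          have h1 : U' * (U'ᴴ * X * V') * V'ᴴ = U' * U'ᴴ * X * (V' * V'ᴴ) := by
            simp only [Matrix.mul_assoc]
          rw [h1, hU'2, hV'2, Matrix.one_mul, Matrix.mul_one]
        have hBbound : ∀ w : Fin n' → H, gq (B.mulVec w) ≤ μ * gq w := by
          intro w
          set z : Fin (n'+1) → H := Fin.cons 0 w with hzdef
          have hYz : Y.mulVec z = Fin.cons 0 (B.mulVec w) := by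
            funext i
            refine Fin.cases ?_ (fun a => ?_) i
            · rw [Fin.cons_zero]
              simp only [Matrix.mulVec, dotProduct]
              rw [Fin.sum_univ_succ, hzdef]
              simp [hYrow0]
            · rw [Fin.cons_succ]
              simp only [Matrix.mulVec, dotProduct]
              rw [Fin.sum_univ_succ, hzdef]
              simp [hBdef]
          have hgq1 : gq (B.mulVec w) = gq (Y.mulVec z) := by rw [hYz, gq_cons0]
          have hYzv : Y.mulVec z = U'ᴴ.mulVec (X.mulVec (V'.mulVec z)) := by
            rw [hYdef, ← Matrix.mulVec_mulVec, ← Matrix.mulVec_mulVec]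
          have hUH : (U'ᴴ)ᴴ * U'ᴴ = 1 := by
            rw [Matrix.conjTranspose_conjTranspose]; exact hU'2
          have hgq2 : gq (Y.mulVec z) = gq (X.mulVec (V'.mulVec z)) := by
            rw [hYzv, gq_mulVec_unitary _ hUH]
          have hgq3 : gq (V'.mulVec z) = gq z := gq_mulVec_unitary V' hV'1 z
          have hgz : gq z = gq w := by rw [hzdef, gq_cons0]
          calc gq (B.mulVec w) = gq (X.mulVec (V'.mulVec z)) := by rw [hgq1, hgq2]
          _ ≤ μ * gq (V'.mulVec z) := hmax _
          _ = μ * gq w := by rw [hgq3, hgz]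
        obtain ⟨U₂, V₂, σ₂, hU₂, hV₂, hσ₂0, hσ₂mono, hBeq, hσ₂b⟩ := ih m' B
        have hσ₂sq : ∀ i, σ₂ i ^ 2 ≤ μ := hσ₂b μ hμ0 hBbound
        have hσ₂le : ∀ i, σ₂ i ≤ σ₁ := by
          intro i
          nlinarith [hσ₂sq i, hσ₂0 i, hσ₁pos, hσ₁sq]
        set σ : ℕ → ℝ := fun t => if t = 0 then σ₁ else σ₂ (t - 1) with hσdef
        set S₂ : Matrix (Fin m') (Fin n') H := Matrix.of fun (a : Fin m') (b : Fin n') =>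
            if (a : ℕ) = (b : ℕ) then ((σ₂ (a : ℕ) : ℝ) : H) else 0 with hS₂def
        set U : Matrix (Fin (m'+1)) (Fin (m'+1)) H := U' * blkc 1 U₂ with hUdef
        set V : Matrix (Fin (n'+1)) (Fin (n'+1)) H := V' * blkc 1 V₂ with hVdef
        have hUunit : Uᴴ * U = 1 := by
          rw [hUdef, Matrix.conjTranspose_mul]
          have h1 : (blkc 1 U₂)ᴴ * U'ᴴ * (U' * blkc 1 U₂)
              = (blkc 1 U₂)ᴴ * (U'ᴴ * U' * blkc 1 U₂) := by
            simp only [Matrix.mul_assoc]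
          rw [h1, hU'1, Matrix.one_mul, blkc_conjT, blkc_mul, star_one, one_mul, hU₂, blkc_one]
        have hVunit : Vᴴ * V = 1 := by
          rw [hVdef, Matrix.conjTranspose_mul]
          have h1 : (blkc 1 V₂)ᴴ * V'ᴴ * (V' * blkc 1 V₂)
              = (blkc 1 V₂)ᴴ * (V'ᴴ * V' * blkc 1 V₂) := by
            simp only [Matrix.mul_assoc]
          rw [h1, hV'1, Matrix.one_mul, blkc_conjT, blkc_mul, star_one, one_mul, hV₂, blkc_one]
        have hSig : (Matrix.of fun (i : Fin (m'+1)) (j : Fin (n'+1)) =>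
              if (i : ℕ) = (j : ℕ) then ((σ (i : ℕ) : ℝ) : H) else 0)
            = blkc ((σ₁ : ℝ) : H) S₂ := by
          refine Matrix.ext fun i j => ?_
          refine Fin.cases ?_ (fun a => ?_) i <;> refine Fin.cases ?_ (fun b => ?_) j
          · simp [hσdef]
          · simp [Fin.val_succ]
          · simp [Fin.val_succ]
          · simp [hσdef, hS₂def, Fin.val_succ]
        have key : U * blkc ((σ₁ : ℝ) : H) S₂ * Vᴴ
            = U' * blkc ((σ₁ : ℝ) : H) (U₂ * S₂ * V₂ᴴ) * V'ᴴ := by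
          rw [hUdef, hVdef, Matrix.conjTranspose_mul, blkc_conjT, star_one]
          have h1 : U' * blkc 1 U₂ * blkc ((σ₁ : ℝ) : H) S₂ * (blkc 1 V₂ᴴ * V'ᴴ)
              = U' * (blkc 1 U₂ * blkc ((σ₁ : ℝ) : H) S₂ * blkc 1 V₂ᴴ) * V'ᴴ := by
            simp only [Matrix.mul_assoc]
          rw [h1, blkc_mul, blkc_mul, one_mul, mul_one]
        have hXfinal : X = U * (Matrix.of fun (i : Fin (m'+1)) (j : Fin (n'+1)) =>
            if (i : ℕ) = (j : ℕ) then ((σ (i : ℕ) : ℝ) : H) else 0) * Vᴴ := by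
          rw [hSig, key, ← hBeq, ← hYblk, ← hX']
        have hσ0 : ∀ i, 0 ≤ σ i := by
          intro i
          rcases i with _ | t
          · simpa [hσdef] using hσ₁pos.le
          · simpa [hσdef] using hσ₂0 t
        have hσmono : ∀ i j : ℕ, i ≤ j → σ j ≤ σ i := by
          intro i j hij
          rcases i with _ | s <;> rcases j with _ | t
          · exact le_refl _
          · simpa [hσdef] using hσ₂le t
          · omega
          · simpa [hσdef] using hσ₂mono s t (by omega)
        have hbound : ∀ c : ℝ, 0 ≤ c → (∀ v, gq (X.mulVec v) ≤ c * gq v) →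
            ∀ i, σ i ^ 2 ≤ c := by
          intro c hc hcv i
          have hμc : μ ≤ c := by
            have h4 := hcv v₀
            rw [hv₀1, mul_one] at h4
            exact h4
          rcases i with _ | t
          · have : σ 0 = σ₁ := by simp [hσdef]
            rw [this, hσ₁sq]; exact hμc
          · have : σ (t+1) = σ₂ t := by simp [hσdef]
            rw [this]; exact le_trans (hσ₂sq t) hμc
        exact ⟨U, V, σ, hUunit, hVunit, hσ0, hσmono, hXfinal, hbound⟩

end QSVD

/-- Quaternion singular value decomposition (QSVD, Zhang 1997): every `m × n` quaternion
matrix `X` factors as `X = U Σ Vᴴ` with `U`, `V` unitary quaternion matrices and `Σ` the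
`m × n` matrix whose diagonal entries are nonincreasing nonnegative reals. -/
theorem quaternion_svd_exists {m n : ℕ} (X : Matrix (Fin m) (Fin n) ℍ[ℝ]) :
    ∃ (U : Matrix (Fin m) (Fin m) ℍ[ℝ]) (V : Matrix (Fin n) (Fin n) ℍ[ℝ]) (σ : ℕ → ℝ),
      Uᴴ * U = 1 ∧ Vᴴ * V = 1 ∧ (∀ i, 0 ≤ σ i) ∧ (∀ i j, i ≤ j → σ j ≤ σ i) ∧
      X = U * (Matrix.of fun (i : Fin m) (j : Fin n) =>
        if (i : ℕ) = (j : ℕ) then ((σ (i : ℕ) : ℝ) : ℍ[ℝ]) else 0) * Vᴴ := by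
  obtain ⟨U, V, σ, h1, h2, h3, h4, h5, _⟩ := QSVD.main n m X
  exact ⟨U, V, σ, h1, h2, h3, h4, h5⟩
end
end
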